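/- Let 𝒰 ≠ {Ω_n, ∅} be a union closed set on Ω_n that is the canonical representative of its isomorphism class, and write its non-empty members as A₁ < A₂ < ⋯ < A_k in the order <. Then for every m with 1 ≤ m ≤ k, the family {A₁, A₂, …, A_m, ∅} is also the canonical representative of its isomorphism class. -/

import Mathlib

/-- Binary encoding of a subset `A ⊆ Ω_n = {1,…,n}` (modeled as `Finset (Fin n)`):
`b(A) = Σ_{i∈A} 2^(i-1)`. -/
def bcode {n : ℕ} (A : Finset (Fin n)) : ℕ := ∑ i ∈ A, 2 ^ (i : ℕ)

/-- The order on subsets of `Ω_n`: `A < B` iff `B` has fewer elements than `A`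
(sets with more elements are smaller), or they have the same number of elements
and `b(A) < b(B)`. -/
def setLT {n : ℕ} (A B : Finset (Fin n)) : Prop :=
  B.card < A.card ∨ (A.card = B.card ∧ bcode A < bcode B)

/-- A numeric key encoding the order `setLT`: since `bcode A < 2^n`, we have
`setLT A B ↔ key A < key B`. -/
def key {n : ℕ} (A : Finset (Fin n)) : ℕ := (n - A.card) * 2 ^ n + bcode A

/-- A union closed set on `Ω_n`: a family of subsets of `Ω_n` closed under
pairwise unions that contains the full set `Ω_n` and the empty set. -/
def IsUCS {n : ℕ} (U : Finset (Finset (Fin n))) : Prop :=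
  (∀ A ∈ U, ∀ B ∈ U, A ∪ B ∈ U) ∧ Finset.univ ∈ U ∧ ∅ ∈ U

/-- The action of a permutation `Π` of `Ω_n` on a family of sets:
each element of each set is replaced by its image under `Π`. -/
def permFam {n : ℕ} (π : Equiv.Perm (Fin n)) (U : Finset (Finset (Fin n))) :
    Finset (Finset (Fin n)) := U.image (fun A => A.image π)

/-- The string `s(𝒰)` of a family `𝒰`: the keys of the non-empty members
listed in increasing order `A₁ < A₂ < ⋯ < A_k` (w.r.t. `setLT`). -/
def sStr {n : ℕ} (U : Finset (Finset (Fin n))) : List ℕ :=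
  ((U.filter (fun A => A ≠ ∅)).image key).sort (· ≤ ·)

/-- A family `𝒰` is canonical if `s(𝒰)` is lexicographically ≤ `s(Π(𝒰))` for
every permutation `Π` of `Ω_n`, i.e. no permutation yields a lexicographically
smaller string. -/
def IsCanonical {n : ℕ} (U : Finset (Finset (Fin n))) : Prop :=
  ∀ π : Equiv.Perm (Fin n), ¬ List.Lex (· < ·) (sStr (permFam π U)) (sStr U)

lemma bcode_inj {n : ℕ} : Function.Injective (bcode (n := n)) := by
  intro A B h
  have hv : Function.Injective (Fin.val : Fin n → ℕ) := Fin.val_injective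
  have hA : ∑ i ∈ A.image (Fin.val), 2 ^ i = bcode A :=
    Finset.sum_image (fun x _ y _ hxy => hv hxy)
  have hB : ∑ i ∈ B.image (Fin.val), 2 ^ i = bcode B :=
    Finset.sum_image (fun x _ y _ hxy => hv hxy)
  exact Finset.image_injective hv
    (Finset.geomSum_injective (n := 2) le_rfl (hA.trans (h.trans hB.symm)))

lemma sum_two_pow_lt (n : ℕ) : ∑ i ∈ Finset.range n, 2 ^ i < 2 ^ n := by
  induction n with
  | zero => simp
  | succ n ih => rw [Finset.sum_range_succ, pow_succ]; omega

lemma bcode_lt {n : ℕ} (A : Finset (Fin n)) : bcode A < 2 ^ n := by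
  calc bcode A ≤ ∑ i : Fin n, 2 ^ (i : ℕ) :=
        Finset.sum_le_sum_of_subset (Finset.subset_univ A)
    _ = ∑ i ∈ Finset.range n, 2 ^ i := Fin.sum_univ_eq_sum_range _ _
    _ < 2 ^ n := sum_two_pow_lt n

lemma key_mono {n : ℕ} {A B : Finset (Fin n)} (h : setLT A B) : key A < key B := by
  have hA : A.card ≤ n := by simpa using Finset.card_le_univ A
  have hB : B.card ≤ n := by simpa using Finset.card_le_univ B
  have hbA := bcode_lt A
  have hbB := bcode_lt B
  rcases h with h | ⟨h1, h2⟩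
  · have : n - A.card + 1 ≤ n - B.card := by omega
    calc key A < (n - A.card + 1) * 2 ^ n := by unfold key; nlinarith
      _ ≤ (n - B.card) * 2 ^ n := Nat.mul_le_mul_right _ this
      _ ≤ key B := Nat.le_add_right _ _
  · unfold key; rw [h1]; omega

lemma setLT_trichotomy {n : ℕ} {A B : Finset (Fin n)} (h : A ≠ B) :
    setLT A B ∨ setLT B A := by
  rcases Nat.lt_trichotomy A.card B.card with hc | hc | hc
  · exact Or.inr (Or.inl hc)
  · rcases Nat.lt_trichotomy (bcode A) (bcode B) with hb | hb | hb
    · exact Or.inl (Or.inr ⟨hc, hb⟩)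
    · exact absurd (bcode_inj hb) h
    · exact Or.inr (Or.inr ⟨hc.symm, hb⟩)
  · exact Or.inl (Or.inl hc)

lemma key_inj {n : ℕ} : Function.Injective (key (n := n)) := by
  intro A B h
  by_contra hne
  rcases setLT_trichotomy hne with h' | h' <;> exact absurd h (by
    first
      | exact Nat.ne_of_lt (key_mono h')
      | exact Nat.ne_of_gt (key_mono h'))

lemma sort_sublist_of_subset {s t : Finset ℕ} (h : s ⊆ t) :
    List.Sublist (s.sort (· ≤ ·)) (t.sort (· ≤ ·)) := by
  apply List.sublist_of_subperm_of_pairwise _ (Finset.pairwise_sort _ _) (Finset.pairwise_sort _ _)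
  rw [← Multiset.coe_le, Finset.sort_eq, Finset.sort_eq]
  exact Finset.val_le_iff.2 h

lemma sort_eq_append {s t : Finset ℕ} (hst : s ⊆ t) (h : ∀ x ∈ s, ∀ y ∈ t \ s, x ≤ y) :
    t.sort (· ≤ ·) = s.sort (· ≤ ·) ++ (t \ s).sort (· ≤ ·) := by
  refine (fun hp hs => List.Perm.eq_of_pairwise' (Finset.pairwise_sort _ _) hs hp) ?_ ?_
  · rw [← Multiset.coe_eq_coe, ← Multiset.coe_add, Finset.sort_eq, Finset.sort_eq,
      Finset.sort_eq, Finset.sdiff_val, add_comm,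
      tsub_add_cancel_of_le (Finset.val_le_iff.2 hst)]
  · rw [List.pairwise_append]
    exact ⟨Finset.pairwise_sort _ _, Finset.pairwise_sort _ _,
      fun x hx y hy => h x ((Finset.mem_sort _).1 hx) y ((Finset.mem_sort _).1 hy)⟩

lemma lex_step : ∀ {P Q : List ℕ}, List.Lex (· < ·) P Q → ∀ {A : List ℕ} (R : List ℕ),
    A.Pairwise (· ≤ ·) → List.Sublist P A → P.length = Q.length → List.Lex (· < ·) A (Q ++ R) := by
  intro P Q h
  induction h with
  | nil => intro A R _ _ hlen; simp at hlen
  | @rel a l₁ b l₂ hab =>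
    intro A R hA hPA _
    match A, hPA with
    | c :: A', hPA =>
      have ha : a ∈ c :: A' := hPA.subset List.mem_cons_self
      have hca : c ≤ a := by
        rcases List.mem_cons.1 ha with h | h
        · exact h.ge
        · exact (List.pairwise_cons.1 hA).1 a h
      exact List.Lex.rel (lt_of_le_of_lt hca hab)
  | @cons a l₁ l₂ h ih =>
    intro A R hA hPA hlen
    match A, hPA with
    | c :: A', hPA =>
      have ha : a ∈ c :: A' := hPA.subset List.mem_cons_self
      have hca : c ≤ a := by
        rcases List.mem_cons.1 ha with h | h
        · exact h.ge
        · exact (List.pairwise_cons.1 hA).1 a h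
      rcases lt_or_eq_of_le hca with hlt | heq
      · exact List.Lex.rel hlt
      · subst heq
        refine List.Lex.cons (ih R (List.pairwise_cons.1 hA).2 ?_ (by simpa using hlen))
        exact (List.cons_sublist_cons).1 hPA

/-- If `𝒰 ≠ {Ω_n, ∅}` is a canonical union closed set with non-empty members
`A₁ < A₂ < ⋯ < A_k`, then for every `1 ≤ m ≤ k` the family `{A₁, …, A_m, ∅}` is
also canonical. Here `{A₁, …, A_m}` is expressed as a non-empty initial segment
`V` of the non-empty members of `𝒰` w.r.t. the order `setLT`. -/
theorem canonical_initial_segment {n : ℕ} (U : Finset (Finset (Fin n))) (hU : IsUCS U)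
    (hne : U ≠ {Finset.univ, ∅}) (hcan : IsCanonical U)
    (V : Finset (Finset (Fin n))) (hVsub : V ⊆ U) (hVempty : ∅ ∉ V) (hVne : V.Nonempty)
    (hVinit : ∀ A ∈ V, ∀ B ∈ U, B ≠ ∅ → setLT B A → B ∈ V) :
    IsCanonical (insert ∅ V) := by
  intro π hlex
  apply hcan π
  have hfinj : Function.Injective (fun A : Finset (Fin n) => A.image π) :=
    Finset.image_injective π.injective
  set U' := U.filter (fun A => A ≠ ∅) with hU'
  have hVU' : V ⊆ U' := fun A hA =>
    Finset.mem_filter.2 ⟨hVsub hA, fun h => hVempty (h ▸ hA)⟩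
  have hVfilter : V.filter (fun A => A ≠ ∅) = V :=
    Finset.filter_true_of_mem (fun A hA h => hVempty (h ▸ hA))
  -- sStr of insert ∅ V
  have h1 : sStr (insert ∅ V) = (V.image key).sort (· ≤ ·) := by
    unfold sStr
    rw [Finset.filter_insert, if_neg (by simp), hVfilter]
  -- sStr of permFam π (insert ∅ V)
  have hPV : ∀ B ∈ V.image (fun A => Finset.image (⇑π) A), B ≠ ∅ := by
    intro B hB
    obtain ⟨A, hA, rfl⟩ := Finset.mem_image.1 hB
    simp only [ne_eq, Finset.image_eq_empty]
    exact fun h => hVempty (h ▸ hA)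
  have h2 : sStr (permFam π (insert ∅ V)) = ((permFam π V).image key).sort (· ≤ ·) := by
    unfold sStr permFam
    rw [Finset.image_insert, Finset.image_empty, Finset.filter_insert, if_neg (by simp),
      Finset.filter_true_of_mem (fun B hB => hPV B hB)]
  -- sStr of U and permFam π U
  have h3 : sStr U = (U'.image key).sort (· ≤ ·) := rfl
  have h4 : sStr (permFam π U) = ((permFam π U').image key).sort (· ≤ ·) := by
    unfold sStr permFam
    congr 2
    rw [Finset.filter_image]
    congr 1
    apply Finset.filter_congr
    intro A _
    simp [Finset.image_eq_empty]
  rw [h1, h2] at hlex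
  rw [h3, h4]
  -- order condition for the prefix decomposition
  have hord : ∀ x ∈ V.image key, ∀ y ∈ (U'.image key) \ (V.image key), x ≤ y := by
    intro x hx y hy
    obtain ⟨A, hA, rfl⟩ := Finset.mem_image.1 hx
    obtain ⟨hy1, hy2⟩ := Finset.mem_sdiff.1 hy
    obtain ⟨B, hB, rfl⟩ := Finset.mem_image.1 hy1
    obtain ⟨hBU, hBne⟩ := Finset.mem_filter.1 hB
    have hBV : B ∉ V := fun h => hy2 (Finset.mem_image_of_mem key h)
    have hAB : A ≠ B := fun h => hBV (h ▸ hA)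
    rcases setLT_trichotomy hAB with h | h
    · exact (key_mono h).le
    · exact absurd (hVinit A hA B hBU hBne h) hBV
  have hsubK : V.image key ⊆ U'.image key := Finset.image_subset_image hVU'
  rw [sort_eq_append hsubK hord]
  -- lengths
  have hlen : (((permFam π V).image key).sort (· ≤ ·)).length
      = ((V.image key).sort (· ≤ ·)).length := by
    rw [Finset.length_sort, Finset.length_sort,
      Finset.card_image_of_injective _ key_inj, Finset.card_image_of_injective _ key_inj]
    unfold permFam
    rw [Finset.card_image_of_injective _ hfinj]
  -- sublist
  have hsub : List.Sublist (((permFam π V).image key).sort (· ≤ ·))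
      (((permFam π U').image key).sort (· ≤ ·)) := by
    apply sort_sublist_of_subset
    exact Finset.image_subset_image (Finset.image_subset_image hVU')
  exact lex_step hlex _ (Finset.pairwise_sort _ _) hsub hlen
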